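/- For every k ≥ 2 and every n ≥ k + 1, the k-th decimal digit of 5^n (counting from the right, 0-indexed) is periodic in n with period 2^(k−1); that is, d_{n + 2^(k−1)}(k) = d_n(k) for all n ≥ k + 1, where d_n(k) = (5^n / 10^k) mod 10. -/

import Mathlib

lemma pow_five_aux (m : ℕ) : (2:ℤ)^(m+2) ∣ 5^(2^m) - 1 := by
  induction m with
  | zero => norm_num
  | succ m ih =>
    have h1 : (5:ℤ)^(2^(m+1)) - 1 = (5^(2^m) - 1) * (5^(2^m) + 1) := by
      rw [pow_succ, pow_mul]; ring
    have h2 : (2:ℤ) ∣ 5^(2^m) + 1 := by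
      have h : (5:ℤ)^(2^m) ≡ 1^(2^m) [ZMOD 2] := Int.ModEq.pow _ (by decide)
      simp [Int.ModEq] at h
      omega
    have := mul_dvd_mul ih h2
    rw [← h1] at this
    calc (2:ℤ)^(m+1+2) = 2^(m+2) * 2 := by ring
    _ ∣ _ := this

theorem digit_periodicity (k : ℕ) (hk : 2 ≤ k) (n : ℕ) (hn : k + 1 ≤ n) :
    5 ^ (n + 2 ^ (k - 1)) / 10 ^ k % 10 = 5 ^ n / 10 ^ k % 10 := by
  set p := 2 ^ (k - 1) with hp
  have h2 : (2:ℤ)^(k+1) ∣ (5:ℤ)^p - 1 := by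
    have := pow_five_aux (k - 1)
    have hk1 : k - 1 + 2 = k + 1 := by omega
    rwa [hk1] at this
  have h5 : (5:ℤ)^(k+1) ∣ (5:ℤ)^n := pow_dvd_pow _ hn
  have hd : (10:ℤ)^(k+1) ∣ (5:ℤ)^(n+p) - 5^n := by
    have : (5:ℤ)^(n+p) - 5^n = 5^n * (5^p - 1) := by rw [pow_add]; ring
    rw [this]
    calc (10:ℤ)^(k+1) = 5^(k+1) * 2^(k+1) := by rw [← mul_pow]; norm_num
    _ ∣ 5^n * (5^p - 1) := mul_dvd_mul h5 h2
  have hmod : (5:ℕ)^n ≡ 5^(n+p) [MOD 10^(k+1)] := by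
    rw [Nat.modEq_iff_dvd]
    push_cast
    exact hd
  have hmod' : 5^(n+p) % 10^(k+1) = 5^n % 10^(k+1) := hmod.symm
  rw [← Nat.mod_mul_right_div_self, ← Nat.mod_mul_right_div_self,
      show (10:ℕ)^k * 10 = 10^(k+1) from by ring, hmod']
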